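/- arXiv:1402.2143 — 6 statements merged into one kernel-verified Lean document; each statement's English description precedes it below -/
import Mathlib

section
/- For any DMTS D over a finite alphabet Σ, D ≤m mc(D) and D ≡th mc(D), where mc(D) is the may-completion of D; in particular ⟦D⟧ = ⟦mc(D)⟧. -/
open Set

/-- A labeled transition system over alphabet `A` with state space `S`. -/
structure LTS (A : Type) (S : Type) where
  init : Set S
  trans : Set (S × A × S)

/-- A disjunctive modal transition system. -/
structure DMTS (A : Type) (S : Type) where
  init : Set S
  may : Set (S × A × S)
  must : Set (S × Set (A × S))

/-- The DMTS consistency condition: must-transitions are backed by may-transitions. -/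
def DMTS.Consistent {A S : Type} (D : DMTS A S) : Prop :=
  ∀ s N, (s, N) ∈ D.must → ∀ a t, (a, t) ∈ N → (s, a, t) ∈ D.may

/-- An LTS viewed as a DMTS implementation. -/
def LTS.toDMTS {A S : Type} (I : LTS A S) : DMTS A S :=
  ⟨I.init, I.trans, {p | ∃ a t, (p.1, a, t) ∈ I.trans ∧ p.2 = {(a, t)}}⟩

/-- `R` is a modal refinement between DMTS. -/
def IsDMTSRef {A S1 S2 : Type} (D1 : DMTS A S1) (D2 : DMTS A S2)
    (R : Set (S1 × S2)) : Prop :=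
  ∀ s1 s2, (s1, s2) ∈ R →
    (∀ a t1, (s1, a, t1) ∈ D1.may → ∃ t2, (s2, a, t2) ∈ D2.may ∧ (t1, t2) ∈ R) ∧
    (∀ N2, (s2, N2) ∈ D2.must → ∃ N1, (s1, N1) ∈ D1.must ∧
      ∀ a t1, (a, t1) ∈ N1 → ∃ t2, (a, t2) ∈ N2 ∧ (t1, t2) ∈ R)

/-- DMTS modal refinement `D1 ≤m D2`. -/
def DMTS.Refines {A S1 S2 : Type} (D1 : DMTS A S1) (D2 : DMTS A S2) : Prop :=
  ∃ R, IsDMTSRef D1 D2 R ∧ ∀ s1 ∈ D1.init, ∃ s2 ∈ D2.init, (s1, s2) ∈ R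

/-- An LTS `I` is an implementation of the DMTS `D`, i.e. `I ∈ ⟦D⟧`. -/
def DMTS.Sat {A S T : Type} (D : DMTS A S) (I : LTS A T) : Prop :=
  DMTS.Refines I.toDMTS D

/-- DMTS thorough refinement `D1 ≤th D2`, i.e. `⟦D1⟧ ⊆ ⟦D2⟧`. -/
def DMTS.ThRefines {A S1 S2 : Type} (D1 : DMTS A S1) (D2 : DMTS A S2) : Prop :=
  ∀ (T : Type) [Fintype T] (I : LTS A T), D1.Sat I → D2.Sat I

/-- The DMTS `D` with `s` as the only initial state. -/
def DMTS.atState {A S : Type} (D : DMTS A S) (s : S) : DMTS A S :=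
  ⟨{s}, D.may, D.must⟩

/-- Thorough refinement between states of a DMTS: `t' ≤th t`. -/
def DMTS.stateThLe {A S : Type} (D : DMTS A S) (t' t : S) : Prop :=
  (D.atState t').ThRefines (D.atState t)

/-- The may-completion `mc(D)` of a DMTS. -/
def DMTS.mc {A S : Type} (D : DMTS A S) : DMTS A S :=
  ⟨D.init, {p | ∃ t, (p.1, p.2.1, t) ∈ D.may ∧ D.stateThLe p.2.2 t}, D.must⟩

/-- A (non-deterministic) acceptance automaton. -/
structure AA (A : Type) (S : Type) where
  init : Set S
  Tran : S → Set (Set (A × S))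

/-- `R` is a modal refinement between transition-constraint assignments
(shared by acceptance automata and `L`-expressions). -/
def IsAARef {A S1 S2 : Type} (T1 : S1 → Set (Set (A × S1)))
    (T2 : S2 → Set (Set (A × S2))) (R : Set (S1 × S2)) : Prop :=
  ∀ s1 s2, (s1, s2) ∈ R → ∀ M1 ∈ T1 s1, ∃ M2 ∈ T2 s2,
    (∀ a t1, (a, t1) ∈ M1 → ∃ t2, (a, t2) ∈ M2 ∧ (t1, t2) ∈ R) ∧
    (∀ a t2, (a, t2) ∈ M2 → ∃ t1, (a, t1) ∈ M1 ∧ (t1, t2) ∈ R)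

/-- AA modal refinement `A1 ≤m A2`. -/
def AA.Refines {A S1 S2 : Type} (A1 : AA A S1) (A2 : AA A S2) : Prop :=
  ∃ R, IsAARef A1.Tran A2.Tran R ∧ ∀ s1 ∈ A1.init, ∃ s2 ∈ A2.init, (s1, s2) ∈ R

/-- An LTS viewed as an AA implementation. -/
def LTS.toAA {A S : Type} (I : LTS A S) : AA A S :=
  ⟨I.init, fun s => {{p | (s, p.1, p.2) ∈ I.trans}}⟩

/-- An LTS `I` is an implementation of the AA `Aut`, i.e. `I ∈ ⟦Aut⟧`. -/
def AA.Sat {A S T : Type} (Aut : AA A S) (I : LTS A T) : Prop :=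
  AA.Refines I.toAA Aut

/-- Formulae of the hybrid modal logic `L(X)`. -/
inductive LForm (A : Type) (X : Type) where
  | tt : LForm A X
  | ff : LForm A X
  | dia : A → X → LForm A X
  | neg : LForm A X → LForm A X
  | and : LForm A X → LForm A X → LForm A X

/-- Definable disjunction in `L(X)`. -/
def LForm.lor {A X : Type} (φ ψ : LForm A X) : LForm A X :=
  LForm.neg (LForm.and (LForm.neg φ) (LForm.neg ψ))

/-- Semantics of `L(X)`: a set of subsets of `A × X`. -/
def lsem {A X : Type} : LForm A X → Set (Set (A × X))
  | LForm.tt => Set.univ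
  | LForm.ff => ∅
  | LForm.dia a x => {M | (a, x) ∈ M}
  | LForm.neg φ => (lsem φ)ᶜ
  | LForm.and φ ψ => lsem φ ∩ lsem ψ

/-- An `L`-expression. -/
structure LExpr (A : Type) (X : Type) where
  init : Set X
  Phi : X → LForm A X

/-- Modal refinement of `L`-expressions `E1 ≤m E2`. -/
def LExpr.Refines {A X1 X2 : Type} (E1 : LExpr A X1) (E2 : LExpr A X2) : Prop :=
  ∃ R, IsAARef (fun x => lsem (E1.Phi x)) (fun x => lsem (E2.Phi x)) R ∧
    ∀ x1 ∈ E1.init, ∃ x2 ∈ E2.init, (x1, x2) ∈ R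

/-- An LTS `I` is an implementation of the `L`-expression `E`, i.e. `I ∈ ⟦E⟧`. -/
def LExpr.Sat {A X T : Type} (E : LExpr A X) (I : LTS A T) : Prop :=
  ∃ R, IsAARef (LTS.toAA I).Tran (fun x => lsem (E.Phi x)) R ∧
    ∀ s ∈ I.init, ∃ x ∈ E.init, (s, x) ∈ R

instance {α : Type} [Finite α] : Finite (Set α) :=
  Finite.of_equiv (α → Prop) (Equiv.refl _)

/-- An enumeration of a set over a finite type. -/
noncomputable def setList {α : Type} [Finite α] (s : Set α) : List α :=
  s.toFinite.toFinset.toList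

/-- Finite syntactic conjunction. -/
def listAnd {A X : Type} (l : List (LForm A X)) : LForm A X :=
  l.foldr LForm.and LForm.tt

/-- Finite syntactic disjunction. -/
def listOr {A X : Type} (l : List (LForm A X)) : LForm A X :=
  l.foldr LForm.lor LForm.ff

/-- The translation `bl` from acceptance automata to `L`-expressions:
`Φ(s) = ⋁_{M ∈ Tran(s)} ( ⋀_{(a,t)∈M} ⟨a⟩t ∧ ⋀_{(b,u)∉M} ¬⟨b⟩u )`. -/
noncomputable def bl {A S : Type} [Finite A] [Finite S] (Aut : AA A S) : LExpr A S :=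
  ⟨Aut.init, fun s => listOr ((setList (Aut.Tran s)).map fun M =>
    LForm.and
      (listAnd ((setList M).map fun p => LForm.dia p.1 p.2))
      (listAnd ((setList Mᶜ).map fun p => LForm.neg (LForm.dia p.1 p.2))))⟩

/-- The translation `lb` from `L`-expressions to acceptance automata. -/
def lb {A X : Type} (E : LExpr A X) : AA A X :=
  ⟨E.init, fun x => lsem (E.Phi x)⟩

/-- The translation `db` from DMTS to acceptance automata. -/
def db {A S : Type} (D : DMTS A S) : AA A S :=
  ⟨D.init, fun s => {M | (∀ a t, (a, t) ∈ M → (s, a, t) ∈ D.may) ∧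
      ∀ N, (s, N) ∈ D.must → (N ∩ M).Nonempty}⟩

/-- The state space of the translation `bd`. -/
def bdState {A S : Type} (Aut : AA A S) : Type :=
  {M : Set (A × S) // ∃ s, M ∈ Aut.Tran s}

/-- Must-transitions of `bd(Aut)`. -/
def bdMust {A S : Type} (Aut : AA A S) : Set (bdState Aut × Set (A × bdState Aut)) :=
  {p | ∃ a t, (a, t) ∈ p.1.val ∧ p.2 = {q | q.1 = a ∧ q.2.val ∈ Aut.Tran t}}

/-- The translation `bd` from acceptance automata to DMTS. -/
def bd {A S : Type} (Aut : AA A S) : DMTS A (bdState Aut) :=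
  ⟨{M | ∃ s ∈ Aut.init, M.val ∈ Aut.Tran s},
   {p | ∃ N, (p.1, N) ∈ bdMust Aut ∧ (p.2.1, p.2.2) ∈ N},
   bdMust Aut⟩

/-- Hennessy-Milner formulae `HML(X)`. -/
inductive HML (A : Type) (X : Type) where
  | tt : HML A X
  | ff : HML A X
  | var : X → HML A X
  | dia : A → HML A X → HML A X
  | box : A → HML A X → HML A X
  | and : HML A X → HML A X → HML A X
  | or : HML A X → HML A X → HML A X

/-- Semantics of `HML(X)` over an LTS, relative to an assignment. -/
def hsem {A X S : Type} (I : LTS A S) : HML A X → (X → Set S) → Set S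
  | HML.tt, _ => Set.univ
  | HML.ff, _ => ∅
  | HML.var x, σ => σ x
  | HML.dia a φ, σ => {s | ∃ s', (s, a, s') ∈ I.trans ∧ s' ∈ hsem I φ σ}
  | HML.box a φ, σ => {s | ∀ s', (s, a, s') ∈ I.trans → s' ∈ hsem I φ σ}
  | HML.and φ ψ, σ => hsem I φ σ ∩ hsem I ψ σ
  | HML.or φ ψ, σ => hsem I φ σ ∪ hsem I ψ σ

/-- The greatest (pre)fixed point semantics of a declaration `Δ`. -/
def hgfp {A X S : Type} (I : LTS A S) (Δ : X → HML A X) (x : X) : Set S :=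
  {s | ∃ σ : X → Set S, (∀ y, σ y ⊆ hsem I (Δ y) σ) ∧ s ∈ σ x}

/-- A ν-calculus expression. -/
structure NuExpr (A : Type) (X : Type) where
  init : Set X
  decl : X → HML A X

/-- `I ⊨ N` for a ν-calculus expression. -/
def NuExpr.Models {A X S : Type} (N : NuExpr A X) (I : LTS A S) : Prop :=
  ∀ s0 ∈ I.init, ∃ x0 ∈ N.init, s0 ∈ hgfp I N.decl x0

/-- A ν-calculus expression in normal form, given by its data `◇(x)` and `□ᵃ(x)`:
`Δ(x) = ⋀_{N∈◇(x)}(⋁_{(a,y)∈N} ⟨a⟩y) ∧ ⋀_{a}[a](⋁_{y∈□ᵃ(x)} y)`. -/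
structure NF (A : Type) (X : Type) where
  init : Set X
  dia : X → Set (Set (A × X))
  box : X → A → Set X

/-- Semantics of the normal-form formula `Δ(x)` relative to an assignment `σ`. -/
def nfSem {A X S : Type} (n : NF A X) (I : LTS A S) (σ : X → Set S) (x : X) : Set S :=
  {s | (∀ N ∈ n.dia x, ∃ p ∈ N, ∃ s', (s, p.1, s') ∈ I.trans ∧ s' ∈ σ p.2) ∧
       (∀ a s', (s, a, s') ∈ I.trans → ∃ y ∈ n.box x a, s' ∈ σ y)}

/-- The greatest (pre)fixed point semantics of a normal-form declaration. -/
def nfGfp {A X S : Type} (n : NF A X) (I : LTS A S) (x : X) : Set S :=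
  {s | ∃ σ : X → Set S, (∀ y, σ y ⊆ nfSem n I σ y) ∧ s ∈ σ x}

/-- `I ⊨ N` for a normal-form ν-calculus expression. -/
def NF.Models {A X S : Type} (n : NF A X) (I : LTS A S) : Prop :=
  ∀ s0 ∈ I.init, ∃ x0 ∈ n.init, s0 ∈ nfGfp n I x0

/-- Thorough refinement between variables of a normal-form expression: `x ≤th y`. -/
def NF.varThLe {A X : Type} (n : NF A X) (x y : X) : Prop :=
  ∀ (S : Type) [Fintype S] (I : LTS A S),
    NF.Models ⟨{x}, n.dia, n.box⟩ I → NF.Models ⟨{y}, n.dia, n.box⟩ I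

/-- `R` is a (ν-calculus) modal refinement between normal-form expressions. -/
def IsNFRef {A X1 X2 : Type} (n1 : NF A X1) (n2 : NF A X2)
    (R : Set (X1 × X2)) : Prop :=
  ∀ x1 x2, (x1, x2) ∈ R →
    (∀ a, ∀ y1 ∈ n1.box x1 a, ∃ y2 ∈ n2.box x2 a, (y1, y2) ∈ R) ∧
    (∀ N2 ∈ n2.dia x2, ∃ N1 ∈ n1.dia x1,
      ∀ a y1, (a, y1) ∈ N1 → ∃ y2, (a, y2) ∈ N2 ∧ (y1, y2) ∈ R)

/-- ν-calculus modal refinement `N1 ≤m N2` (normal forms). -/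
def NF.Refines {A X1 X2 : Type} (n1 : NF A X1) (n2 : NF A X2) : Prop :=
  ∃ R, IsNFRef n1 n2 R ∧ ∀ x1 ∈ n1.init, ∃ x2 ∈ n2.init, (x1, x2) ∈ R

/-- `R` is a modal-thorough refinement between normal-form expressions. -/
def IsNFMTRef {A X1 X2 : Type} (n1 : NF A X1) (n2 : NF A X2)
    (R : Set (X1 × X2)) : Prop :=
  ∀ x1 x2, (x1, x2) ∈ R →
    (∀ a, ∀ y1 ∈ n1.box x1 a, ∀ y1', n1.varThLe y1' y1 →
      ∃ y2 ∈ n2.box x2 a, ∃ y2', n2.varThLe y2' y2 ∧ (y1', y2') ∈ R) ∧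
    (∀ N2 ∈ n2.dia x2, ∃ N1 ∈ n1.dia x1,
      ∀ a y1, (a, y1) ∈ N1 → ∃ y2, (a, y2) ∈ N2 ∧ (y1, y2) ∈ R)

/-- ν-calculus modal-thorough refinement `N1 ≤mt N2`. -/
def NF.MTRefines {A X1 X2 : Type} (n1 : NF A X1) (n2 : NF A X2) : Prop :=
  ∃ R, IsNFMTRef n1 n2 R ∧ ∀ x1 ∈ n1.init, ∃ x2 ∈ n2.init, (x1, x2) ∈ R

/-- Mutual ν-calculus modal refinement `N1 ≡m N2`. -/
def NF.MEquiv {A X1 X2 : Type} (n1 : NF A X1) (n2 : NF A X2) : Prop :=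
  n1.Refines n2 ∧ n2.Refines n1

/-- The characteristic-formula translation `ddh` from DMTS to normal-form expressions. -/
def ddh {A S : Type} (D : DMTS A S) : NF A S :=
  ⟨D.init, fun s => {N | (s, N) ∈ D.must}, fun s a => {t | (s, a, t) ∈ D.may}⟩

/-- The (old) semantic translation `hdt` from normal-form expressions to DMTS. -/
def hdt {A X : Type} (n : NF A X) : DMTS A X :=
  ⟨n.init, {p | ∃ y ∈ n.box p.1 p.2.1, n.varThLe p.2.2 y}, {p | p.2 ∈ n.dia p.1}⟩

/-- The (new) syntactic translation `hd` from normal-form expressions to DMTS. -/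
def hd {A X : Type} (n : NF A X) : DMTS A X :=
  ⟨n.init, {p | p.2.2 ∈ n.box p.1 p.2.1}, {p | p.2 ∈ n.dia p.1}⟩

/-- The embedding of LTS into normal-form ν-calculus expressions. -/
def LTS.toNF {A S : Type} (I : LTS A S) : NF A S :=
  ⟨I.init, fun s => {M | ∃ a t, (s, a, t) ∈ I.trans ∧ M = {(a, t)}},
   fun s a => {t | (s, a, t) ∈ I.trans}⟩

/-- Disjunction of normal-form ν-calculus expressions (on disjoint variable sets). -/
def nfOr {A X1 X2 : Type} (n1 : NF A X1) (n2 : NF A X2) : NF A (X1 ⊕ X2) where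
  init := Sum.inl '' n1.init ∪ Sum.inr '' n2.init
  dia := fun x => match x with
    | Sum.inl x1 => (fun N => (fun p : A × X1 => (p.1, Sum.inl p.2)) '' N) '' n1.dia x1
    | Sum.inr x2 => (fun N => (fun p : A × X2 => (p.1, Sum.inr p.2)) '' N) '' n2.dia x2
  box := fun x a => match x with
    | Sum.inl x1 => Sum.inl '' n1.box x1 a
    | Sum.inr x2 => Sum.inr '' n2.box x2 a

/-- Conjunction of normal-form ν-calculus expressions. -/
def nfAnd {A X1 X2 : Type} (n1 : NF A X1) (n2 : NF A X2) : NF A (X1 × X2) where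
  init := n1.init ×ˢ n2.init
  dia := fun x =>
    {M | ∃ N1 ∈ n1.dia x.1, M = {p : A × (X1 × X2) |
      (p.1, p.2.1) ∈ N1 ∧ p.2.1 ∈ n1.box x.1 p.1 ∧ p.2.2 ∈ n2.box x.2 p.1}} ∪
    {M | ∃ N2 ∈ n2.dia x.2, M = {p : A × (X1 × X2) |
      (p.1, p.2.2) ∈ N2 ∧ p.2.1 ∈ n1.box x.1 p.1 ∧ p.2.2 ∈ n2.box x.2 p.1}}
  box := fun x a => (n1.box x.1 a) ×ˢ (n2.box x.2 a)

/-- The bottom normal-form expression `⊥ = (∅, ∅, ∅)`. -/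
def nfBot (A : Type) : NF A Empty :=
  ⟨∅, fun x => x.elim, fun x => x.elim⟩

/-- The top normal-form expression `⊤ = ({s}, {s}, Δ)` with `Δ(s) = tt`. -/
def nfTop (A : Type) : NF A Unit :=
  ⟨{()}, fun _ => ∅, fun _ _ => {()}⟩


/-! ### Auxiliary development for the may-completion theorem -/

section MayCompletionAux

/-- Pointed satisfiability: state `x` of `D` has an implementation with a designated
single initial state. -/
def PSat {A S : Type} (D : DMTS A S) (x : S) : Prop :=
  ∃ (T' : Type) (_ : Finite T') (M : LTS A T') (m₀ : T'),
    M.init = {m₀} ∧ (D.atState x).Sat M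

lemma stateThLe_refl {A S : Type} (D : DMTS A S) (x : S) : D.stateThLe x x :=
  fun _ _ _ h => h

lemma PSat.mono {A S : Type} {D : DMTS A S} {x z : S} (h : PSat D x)
    (hth : D.stateThLe x z) : PSat D z := by
  obtain ⟨T', fin, M, m₀, hinit, hsat⟩ := h
  letI := fin
  letI := Fintype.ofFinite T'
  exact ⟨T', fin, M, m₀, hinit, hth T' M hsat⟩

lemma isDMTSRef_comp {A S1 S2 S3 : Type} {D1 : DMTS A S1} {D2 : DMTS A S2}
    {D3 : DMTS A S3} {R12 : Set (S1 × S2)} {R23 : Set (S2 × S3)}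
    (h12 : IsDMTSRef D1 D2 R12) (h23 : IsDMTSRef D2 D3 R23) :
    IsDMTSRef D1 D3 {p | ∃ s2, (p.1, s2) ∈ R12 ∧ (s2, p.2) ∈ R23} := by
  rintro s1 s3 ⟨s2, h1, h2⟩
  constructor
  · intro a t1 ht
    obtain ⟨t2, ht2, hr⟩ := (h12 s1 s2 h1).1 a t1 ht
    obtain ⟨t3, ht3, hr'⟩ := (h23 s2 s3 h2).1 a t2 ht2
    exact ⟨t3, ht3, t2, hr, hr'⟩
  · intro N3 hN3
    obtain ⟨N2, hN2, hmap2⟩ := (h23 s2 s3 h2).2 N3 hN3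
    obtain ⟨N1, hN1, hmap1⟩ := (h12 s1 s2 h1).2 N2 hN2
    refine ⟨N1, hN1, ?_⟩
    intro a t1 h
    obtain ⟨t2, ht2, hr⟩ := hmap1 a t1 h
    obtain ⟨t3, ht3, hr'⟩ := hmap2 a t2 ht2
    exact ⟨t3, ht3, t2, hr, hr'⟩

lemma refines_trans {A S1 S2 S3 : Type} {D1 : DMTS A S1} {D2 : DMTS A S2}
    {D3 : DMTS A S3} (h12 : D1.Refines D2) (h23 : D2.Refines D3) : D1.Refines D3 := by
  obtain ⟨R12, hR12, hi12⟩ := h12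
  obtain ⟨R23, hR23, hi23⟩ := h23
  refine ⟨_, isDMTSRef_comp hR12 hR23, ?_⟩
  intro s1 hs1
  obtain ⟨s2, hs2, h1⟩ := hi12 s1 hs1
  obtain ⟨s3, hs3, h2⟩ := hi23 s2 hs2
  exact ⟨s3, hs3, s2, h1, h2⟩

lemma refines_mc {A S : Type} (D : DMTS A S) : D.Refines D.mc := by
  refine ⟨{p | p.1 = p.2}, ?_, fun s hs => ⟨s, hs, rfl⟩⟩
  intro s1 s2 hs
  obtain rfl : s1 = s2 := hs
  constructor
  · intro a t1 ht
    exact ⟨t1, ⟨t1, ht, stateThLe_refl D t1⟩, rfl⟩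
  · intro N2 hN2
    exact ⟨N2, hN2, fun a t1 h => ⟨t1, h, rfl⟩⟩

lemma thRefines_mc {A S : Type} (D : DMTS A S) : D.ThRefines D.mc := by
  intro T _ I hsat
  exact refines_trans hsat (refines_mc D)

/-- `n`-step bisimilarity between a state of `I` and a state of `M`. -/
def nbis {A T : Type} (I : LTS A T) (n : ℕ) : T → (T2 : Type) → LTS A T2 → T2 → Prop :=
  Nat.rec (motive := fun _ => T → (T2 : Type) → LTS A T2 → T2 → Prop)
    (fun _ _ _ _ => True)
    (fun _ ih j T2 M m =>
      (∀ a j', (j, a, j') ∈ I.trans → ∃ m', (m, a, m') ∈ M.trans ∧ ih j' T2 M m') ∧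
      (∀ a m', (m, a, m') ∈ M.trans → ∃ j', (j, a, j') ∈ I.trans ∧ ih j' T2 M m')) n

lemma nbis_embed {A T T1 T2 : Type} (I : LTS A T) (M₁ : LTS A T1) (M₂ : LTS A T2)
    (σ : T1 → T2)
    (hfor : ∀ s a t, (s, a, t) ∈ M₁.trans → (σ s, a, σ t) ∈ M₂.trans)
    (hback : ∀ s a u, (σ s, a, u) ∈ M₂.trans → ∃ t, u = σ t ∧ (s, a, t) ∈ M₁.trans) :
    ∀ (n : ℕ) (j : T) (s : T1), nbis I n j T1 M₁ s → nbis I n j T2 M₂ (σ s) := by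
  intro n
  induction n with
  | zero => intro j s _; trivial
  | succ n IH =>
    intro j s h
    obtain ⟨hf, hb⟩ := h
    refine ⟨?_, ?_⟩
    · intro a j' htr
      obtain ⟨m', hm', hnb⟩ := hf a j' htr
      exact ⟨σ m', hfor _ _ _ hm', IH _ _ hnb⟩
    · intro a u htr
      obtain ⟨t, rfl, ht⟩ := hback _ _ _ htr
      obtain ⟨j', hj', hnb⟩ := hb a t ht
      exact ⟨j', hj', IH _ _ hnb⟩

/-- One step of the modal-refinement functional (with pointed-consistency side
conditions) for refining `I` by `D`. -/
def Fc {A S T : Type} (D : DMTS A S) (I : LTS A T) (W : Set (T × S)) : Set (T × S) :=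
  {p | (∀ a j', (p.1, a, j') ∈ I.trans →
          ∃ w, (p.2, a, w) ∈ D.may ∧ PSat D w ∧ (j', w) ∈ W) ∧
       (∀ N, (p.2, N) ∈ D.must →
          ∃ a j' v, (p.1, a, j') ∈ I.trans ∧ (a, v) ∈ N ∧ PSat D v ∧ (j', v) ∈ W)}

lemma mem_Fc {A S T : Type} (D : DMTS A S) (I : LTS A T) (W : Set (T × S))
    (p : T × S) : p ∈ Fc D I W ↔
    ((∀ a j', (p.1, a, j') ∈ I.trans →
        ∃ w, (p.2, a, w) ∈ D.may ∧ PSat D w ∧ (j', w) ∈ W) ∧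
     (∀ N, (p.2, N) ∈ D.must →
        ∃ a j' v, (p.1, a, j') ∈ I.trans ∧ (a, v) ∈ N ∧ PSat D v ∧ (j', v) ∈ W)) :=
  Iff.rfl

lemma Fc_mono {A S T : Type} (D : DMTS A S) (I : LTS A T) {W W' : Set (T × S)}
    (h : W ⊆ W') : Fc D I W ⊆ Fc D I W' := by
  intro p hp
  obtain ⟨h1, h2⟩ := hp
  refine ⟨?_, ?_⟩
  · intro a j' ht
    obtain ⟨w, hw, hps, hm⟩ := h1 a j' ht
    exact ⟨w, hw, hps, h hm⟩
  · intro N hN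
    obtain ⟨a, j', v, htr, hv, hps, hm⟩ := h2 N hN
    exact ⟨a, j', v, htr, hv, hps, h hm⟩

/-- Iterates of `Fc` from the top. -/
def Wn {A S T : Type} (D : DMTS A S) (I : LTS A T) (n : ℕ) : Set (T × S) :=
  (Fc D I)^[n] Set.univ

lemma Wn_succ {A S T : Type} (D : DMTS A S) (I : LTS A T) (n : ℕ) :
    Wn D I (n + 1) = Fc D I (Wn D I n) :=
  Function.iterate_succ_apply' (Fc D I) n Set.univ

lemma nbis_ref_mem {A S T : Type} (D : DMTS A S) (I : LTS A T) :
    ∀ (n : ℕ) {TM : Type} [Finite TM] (M : LTS A TM) (W₂ : Set (TM × S)),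
      IsDMTSRef M.toDMTS D W₂ → ∀ (j : T) (m : TM) (z : S),
        (m, z) ∈ W₂ → nbis I n j TM M m → (j, z) ∈ Wn D I n := by
  intro n
  induction n with
  | zero => intros; exact Set.mem_univ _
  | succ n IH =>
    intro TM _ M W₂ hW j m z hmz hnb
    obtain ⟨hf, hb⟩ := hnb
    rw [Wn_succ, mem_Fc]
    refine ⟨?_, ?_⟩
    · intro a j' htr
      obtain ⟨m', hm', hnb'⟩ := hf a j' htr
      obtain ⟨w, hw, hr⟩ := (hW m z hmz).1 a m' hm'
      refine ⟨w, hw, ?_, IH M W₂ hW j' m' w hr hnb'⟩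
      exact ⟨TM, inferInstance, ⟨{m'}, M.trans⟩, m', rfl, W₂, hW,
        fun s hs => ⟨w, rfl, by obtain rfl : s = m' := hs; exact hr⟩⟩
    · intro N hN
      obtain ⟨N₁, hN₁, hmap⟩ := (hW m z hmz).2 N hN
      obtain ⟨a, m', htr, rfl⟩ := hN₁
      obtain ⟨v, hv, hr⟩ := hmap a m' rfl
      obtain ⟨j', hj', hnb'⟩ := hb a m' htr
      refine ⟨a, j', v, hj', hv, ?_, IH M W₂ hW j' m' v hr hnb'⟩
      exact ⟨TM, inferInstance, ⟨{m'}, M.trans⟩, m', rfl, W₂, hW,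
        fun s hs => ⟨v, rfl, by obtain rfl : s = m' := hs; exact hr⟩⟩

end MayCompletionAux


section Assemble

/-- Assembling a one-step unfolding implementation from component implementations. -/
lemma assemble {A S T : Type} (D : DMTS A S) (I : LTS A T)
    (n : ℕ) (j : T) (x : S)
    (κ : Type) [Finite κ]
    (TK : κ → Type) (finK : ∀ k, Finite (TK k))
    (MK : ∀ k, LTS A (TK k)) (rt : ∀ k, TK k)
    (lab : κ → A) (js : κ → T) (tg : κ → S)
    (VK : ∀ k, Set (TK k × S))
    (hV : ∀ k, IsDMTSRef (MK k).toDMTS D (VK k))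
    (hVr : ∀ k, (rt k, tg k) ∈ VK k)
    (htrI : ∀ k, (j, lab k, js k) ∈ I.trans)
    (hmay : ∀ k, (x, lab k, tg k) ∈ D.may)
    (hnb : ∀ k, nbis I n (js k) (TK k) (MK k) (rt k))
    (hcov1 : ∀ a j', (j, a, j') ∈ I.trans → ∃ k, lab k = a ∧ js k = j')
    (hcov2 : ∀ N, (x, N) ∈ D.must → ∃ k, (lab k, tg k) ∈ N) :
    ∃ (T' : Type) (_ : Finite T') (M : LTS A T') (m₀ : T'),
      M.init = {m₀} ∧ (D.atState x).Sat M ∧ nbis I (n + 1) j T' M m₀ := by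
  haveI := finK
  set Mtr : Set ((Unit ⊕ (Σ k : κ, TK k)) × A × (Unit ⊕ (Σ k : κ, TK k))) :=
    {u | (∃ k s a t, (s, a, t) ∈ (MK k).trans ∧
            u = (Sum.inr ⟨k, s⟩, a, Sum.inr ⟨k, t⟩)) ∨
         (∃ k, u = (Sum.inl (), lab k, Sum.inr ⟨k, rt k⟩))} with hMtr
  have hfor : ∀ (k : κ) (s : TK k) (a : A) (t : TK k), (s, a, t) ∈ (MK k).trans →
      ((Sum.inr ⟨k, s⟩ : Unit ⊕ (Σ k : κ, TK k)), a, (Sum.inr ⟨k, t⟩ :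
        Unit ⊕ (Σ k : κ, TK k))) ∈ Mtr := by
    intro k s a t h
    exact Or.inl ⟨k, s, a, t, h, rfl⟩
  have hback : ∀ (k : κ) (s : TK k) (a : A) (u : Unit ⊕ (Σ k : κ, TK k)),
      ((Sum.inr ⟨k, s⟩ : Unit ⊕ (Σ k : κ, TK k)), a, u) ∈ Mtr →
      ∃ t, u = Sum.inr ⟨k, t⟩ ∧ (s, a, t) ∈ (MK k).trans := by
    intro k s a u hu
    rcases hu with ⟨k', s', a', t', hmem, heq⟩ | ⟨k', heq⟩
    · rw [Prod.mk.injEq] at heq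
      obtain ⟨h1, h23⟩ := heq
      rw [Prod.mk.injEq] at h23
      obtain ⟨h2, h3⟩ := h23
      rw [Sum.inr.injEq] at h1
      injection h1 with hk hs
      subst hk
      obtain rfl := eq_of_heq hs
      subst h2
      exact ⟨t', h3, hmem⟩
    · rw [Prod.mk.injEq] at heq
      exact absurd heq.1 (fun h => Sum.inr_ne_inl h)
  refine ⟨Unit ⊕ (Σ k : κ, TK k), inferInstance, ⟨{Sum.inl ()}, Mtr⟩, Sum.inl (),
    rfl, ?_, ?_⟩
  · -- Sat
    refine ⟨{u : (Unit ⊕ (Σ k : κ, TK k)) × S |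
        (u.1 = Sum.inl () ∧ u.2 = x) ∨
        ∃ k s, u.1 = Sum.inr ⟨k, s⟩ ∧ (s, u.2) ∈ VK k}, ?_, ?_⟩
    · intro u y hu
      rcases hu with ⟨hu1, hu2⟩ | ⟨k, s, hu1, hsy⟩
      · obtain rfl : y = x := hu2
        subst hu1
        constructor
        · intro a t1 htr
          rcases htr with ⟨k, s, a', t', hmem, heq⟩ | ⟨k, heq⟩
          · rw [Prod.mk.injEq] at heq
            exact absurd heq.1 (fun h => Sum.inl_ne_inr h)
          · rw [Prod.mk.injEq] at heq
            obtain ⟨-, h23⟩ := heq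
            rw [Prod.mk.injEq] at h23
            obtain ⟨h2, h3⟩ := h23
            subst h2
            subst h3
            exact ⟨tg k, hmay k, Or.inr ⟨k, rt k, rfl, hVr k⟩⟩
        · intro N hN
          obtain ⟨k, hk⟩ := hcov2 N hN
          refine ⟨{(lab k, (Sum.inr ⟨k, rt k⟩ : Unit ⊕ (Σ k : κ, TK k)))},
            ⟨lab k, Sum.inr ⟨k, rt k⟩, Or.inr ⟨k, rfl⟩, rfl⟩, ?_⟩
          intro b t1 hb
          rw [Set.mem_singleton_iff, Prod.mk.injEq] at hb
          obtain ⟨rfl, rfl⟩ := hb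
          exact ⟨tg k, hk, Or.inr ⟨k, rt k, rfl, hVr k⟩⟩
      · subst hu1
        constructor
        · intro a t1 htr
          obtain ⟨t, rfl, hmem⟩ := hback k s a t1 htr
          obtain ⟨y', hy', hr⟩ := (hV k s y hsy).1 a t hmem
          exact ⟨y', hy', Or.inr ⟨k, t, rfl, hr⟩⟩
        · intro N hN
          obtain ⟨N₁, hN₁, hmap⟩ := (hV k s y hsy).2 N hN
          obtain ⟨a, t, htr', rfl⟩ := hN₁
          refine ⟨{(a, (Sum.inr ⟨k, t⟩ : Unit ⊕ (Σ k : κ, TK k)))},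
            ⟨a, Sum.inr ⟨k, t⟩, hfor k s a t htr', rfl⟩, ?_⟩
          intro b t1 hb
          rw [Set.mem_singleton_iff, Prod.mk.injEq] at hb
          obtain ⟨hb1, hb2⟩ := hb
          obtain ⟨y', hy', hr⟩ := hmap a t rfl
          subst hb1
          subst hb2
          exact ⟨y', hy', Or.inr ⟨k, t, rfl, hr⟩⟩
    · intro s1 hs1
      obtain rfl : s1 = Sum.inl () := hs1
      exact ⟨x, rfl, Or.inl ⟨rfl, rfl⟩⟩
  · -- nbis
    refine ⟨?_, ?_⟩
    · intro a j' htr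
      obtain ⟨k, hk1, hk2⟩ := hcov1 a j' htr
      refine ⟨Sum.inr ⟨k, rt k⟩, Or.inr ⟨k, by rw [hk1]⟩, ?_⟩
      have := nbis_embed I (MK k) ⟨{Sum.inl ()}, Mtr⟩ (fun s => Sum.inr ⟨k, s⟩)
        (hfor k) (hback k) n (js k) (rt k) (hnb k)
      rwa [hk2] at this
    · intro a m' htr
      rcases htr with ⟨k, s, a', t', hmem, heq⟩ | ⟨k, heq⟩
      · rw [Prod.mk.injEq] at heq
        exact absurd heq.1 (fun h => Sum.inl_ne_inr h)
      · rw [Prod.mk.injEq] at heq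
        obtain ⟨-, h23⟩ := heq
        rw [Prod.mk.injEq] at h23
        obtain ⟨h2, h3⟩ := h23
        subst h2
        subst h3
        exact ⟨js k, htrI k,
          nbis_embed I (MK k) ⟨{Sum.inl ()}, Mtr⟩ (fun s => Sum.inr ⟨k, s⟩)
            (hfor k) (hback k) n (js k) (rt k) (hnb k)⟩

end Assemble


section TC

lemma tc {A S T : Type} [Finite A] [Finite S] [Finite T]
    (D : DMTS A S) (hc : D.Consistent) (I : LTS A T) :
    ∀ (n : ℕ) (j : T) (x : S), (j, x) ∈ Wn D I n → PSat D x →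
      ∃ (T' : Type) (_ : Finite T') (M : LTS A T') (m₀ : T'),
        M.init = {m₀} ∧ (D.atState x).Sat M ∧ nbis I n j T' M m₀ := by
  intro n
  induction n with
  | zero =>
    intro j x _ hp
    obtain ⟨T', fin, M, m₀, hinit, hsat⟩ := hp
    exact ⟨T', fin, M, m₀, hinit, hsat, trivial⟩
  | succ n IH =>
    intro j x hx hp
    rw [Wn_succ, mem_Fc] at hx
    obtain ⟨h1, h2⟩ := hx
    have hmayC : ∀ p : {p : A × T // (j, p.1, p.2) ∈ I.trans},
        ∃ (w : S) (T' : Type) (_ : Finite T') (M : LTS A T') (m₀ : T'),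
          (x, p.1.1, w) ∈ D.may ∧ M.init = {m₀} ∧ (D.atState w).Sat M ∧
            nbis I n p.1.2 T' M m₀ := by
      rintro ⟨⟨a, j'⟩, hp'⟩
      obtain ⟨w, hw, hps, hmem⟩ := h1 a j' hp'
      obtain ⟨T', fin, M, m₀, hinit, hsat, hnb⟩ := IH j' w hmem hps
      exact ⟨w, T', fin, M, m₀, hw, hinit, hsat, hnb⟩
    have hmustC : ∀ q : {N : Set (A × S) // (x, N) ∈ D.must},
        ∃ (a : A) (j' : T) (v : S) (T' : Type) (_ : Finite T') (M : LTS A T')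
          (m₀ : T'), (j, a, j') ∈ I.trans ∧ (a, v) ∈ q.1 ∧ M.init = {m₀} ∧
            (D.atState v).Sat M ∧ nbis I n j' T' M m₀ := by
      rintro ⟨N, hN⟩
      obtain ⟨a, j', v, htr, hv, hps, hmem⟩ := h2 N hN
      obtain ⟨T', fin, M, m₀, hinit, hsat, hnb⟩ := IH j' v hmem hps
      exact ⟨a, j', v, T', fin, M, m₀, htr, hv, hinit, hsat, hnb⟩
    choose w1 T1 fin1 M1 r1 hmay1 hini1 hsat1 hnb1 using hmayC
    choose a2 j2 v2 T2 fin2 M2 r2 htr2 hmem2 hini2 hsat2 hnb2 using hmustC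
    have hV1 : ∀ p, ∃ V, IsDMTSRef (M1 p).toDMTS D V ∧ (r1 p, w1 p) ∈ V := by
      intro p
      obtain ⟨V, hV, hi⟩ := hsat1 p
      obtain ⟨s2, hs2, hmem⟩ := hi (r1 p) (by
        show r1 p ∈ (M1 p).init
        rw [hini1 p]; rfl)
      obtain rfl : s2 = w1 p := hs2
      exact ⟨V, hV, hmem⟩
    have hV2 : ∀ q, ∃ V, IsDMTSRef (M2 q).toDMTS D V ∧ (r2 q, v2 q) ∈ V := by
      intro q
      obtain ⟨V, hV, hi⟩ := hsat2 q
      obtain ⟨s2, hs2, hmem⟩ := hi (r2 q) (by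
        show r2 q ∈ (M2 q).init
        rw [hini2 q]; rfl)
      obtain rfl : s2 = v2 q := hs2
      exact ⟨V, hV, hmem⟩
    choose V1 hV1ref hV1r using hV1
    choose V2 hV2ref hV2r using hV2
    exact assemble D I n j x
      ({p : A × T // (j, p.1, p.2) ∈ I.trans} ⊕ {N : Set (A × S) // (x, N) ∈ D.must})
      (Sum.elim T1 T2)
      (fun k => match k with | .inl p => fin1 p | .inr q => fin2 q)
      (fun k => match k with | .inl p => M1 p | .inr q => M2 q)
      (fun k => match k with | .inl p => r1 p | .inr q => r2 q)
      (Sum.elim (fun p => p.1.1) a2)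
      (Sum.elim (fun p => p.1.2) j2)
      (Sum.elim w1 v2)
      (fun k => match k with | .inl p => V1 p | .inr q => V2 q)
      (fun k => match k with | .inl p => hV1ref p | .inr q => hV2ref q)
      (fun k => match k with | .inl p => hV1r p | .inr q => hV2r q)
      (fun k => match k with | .inl p => p.2 | .inr q => htr2 q)
      (fun k => match k with
        | .inl p => hmay1 p
        | .inr q => hc x q.1 q.2 (a2 q) (v2 q) (hmem2 q))
      (fun k => match k with | .inl p => hnb1 p | .inr q => hnb2 q)
      (fun a j' h => ⟨Sum.inl ⟨(a, j'), h⟩, rfl, rfl⟩)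
      (fun N h => ⟨Sum.inr ⟨N, h⟩, hmem2 ⟨N, h⟩⟩)

lemma transfer {A S T : Type} [Finite A] [Finite S] [Finite T]
    (D : DMTS A S) (hc : D.Consistent) (I : LTS A T)
    (n : ℕ) (j : T) (x z : S) (h : (j, x) ∈ Wn D I n) (hp : PSat D x)
    (hth : D.stateThLe x z) : (j, z) ∈ Wn D I n := by
  obtain ⟨T', fin, M, m₀, hinit, hsat, hnb⟩ := tc D hc I n j x h hp
  letI := fin
  letI := Fintype.ofFinite T'
  obtain ⟨W₂, hW₂, hi⟩ := hth T' M hsat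
  obtain ⟨z', hz', hmz⟩ := hi m₀ (by
    show m₀ ∈ M.init
    rw [hinit]; rfl)
  obtain rfl : z' = z := hz'
  exact nbis_ref_mem D I n M W₂ hW₂ j m₀ _ hmz hnb

end TC


section Main

lemma psat_of_Q {A S T : Type} [Finite S] [Finite T]
    (D : DMTS A S) (hc : D.Consistent) (I : LTS A T) (Q : Set (T × S))
    (hQ : IsDMTSRef I.toDMTS D.mc Q) :
    ∀ j x, (j, x) ∈ Q → PSat D x := by
  intro j x hjx
  refine ⟨T × S, inferInstance,
    ⟨{(j, x)}, {u | (u.1.1, u.2.1, u.2.2.1) ∈ I.trans ∧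
      (u.1.2, u.2.1, u.2.2.2) ∈ D.may ∧ u.2.2 ∈ Q}⟩,
    (j, x), rfl, ?_⟩
  refine ⟨{u : (T × S) × S | u.1 ∈ Q ∧ u.2 = u.1.2}, ?_, ?_⟩
  · rintro ⟨j₂, y₂⟩ y ⟨hq, hy⟩
    have hy' : y = y₂ := hy
    subst hy'
    constructor
    · rintro a ⟨j₃, y₃⟩ ⟨h1, h2, h3⟩
      exact ⟨y₃, h2, h3, rfl⟩
    · intro N hN
      obtain ⟨N₁, hN₁, hmap⟩ := (hQ j₂ y hq).2 N hN
      obtain ⟨a, j₃, htr, rfl⟩ := hN₁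
      obtain ⟨y₃, hy₃, hq₃⟩ := hmap a j₃ rfl
      refine ⟨{(a, ((j₃, y₃) : T × S))},
        ⟨a, (j₃, y₃), ⟨htr, hc y N hN a y₃ hy₃, hq₃⟩, rfl⟩, ?_⟩
      intro b t1 hb
      rw [Set.mem_singleton_iff, Prod.mk.injEq] at hb
      obtain ⟨hb1, hb2⟩ := hb
      subst hb1
      subst hb2
      exact ⟨y₃, hy₃, hq₃, rfl⟩
  · intro s1 hs1
    obtain rfl : s1 = (j, x) := hs1
    exact ⟨x, rfl, hjx, rfl⟩

lemma mem_Wn_of_Q {A S T : Type} [Finite A] [Finite S] [Finite T]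
    (D : DMTS A S) (hc : D.Consistent) (I : LTS A T) (Q : Set (T × S))
    (hQ : IsDMTSRef I.toDMTS D.mc Q) :
    ∀ (n : ℕ) (j : T) (x : S), (j, x) ∈ Q → (j, x) ∈ Wn D I n := by
  intro n
  induction n with
  | zero => intro j x _; exact Set.mem_univ _
  | succ n IH =>
    intro j x hjx
    rw [Wn_succ, mem_Fc]
    refine ⟨?_, ?_⟩
    · intro a j' ht
      obtain ⟨t'', hmay'', hQ'⟩ := (hQ j x hjx).1 a j' ht
      obtain ⟨z, hz, hth⟩ := hmay''
      exact ⟨z, hz, (psat_of_Q D hc I Q hQ j' t'' hQ').mono hth,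
        transfer D hc I n j' t'' z (IH j' t'' hQ')
          (psat_of_Q D hc I Q hQ j' t'' hQ') hth⟩
    · intro N hN
      obtain ⟨N₁, hN₁, hmap⟩ := (hQ j x hjx).2 N hN
      obtain ⟨a, j', htr, rfl⟩ := hN₁
      obtain ⟨v, hv, hQv⟩ := hmap a j' rfl
      exact ⟨a, j', v, htr, hv, psat_of_Q D hc I Q hQ j' v hQv, IH j' v hQv⟩

lemma exists_stab {A S T : Type} [Finite S] [Finite T]
    (D : DMTS A S) (I : LTS A T) : ∃ N, Fc D I (Wn D I N) = Wn D I N := by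
  by_contra h
  push_neg at h
  have hmono : ∀ n, Wn D I (n + 1) ⊆ Wn D I n := by
    intro n
    induction n with
    | zero => intro p _; exact Set.mem_univ _
    | succ n IH =>
      intro p hp
      rw [Wn_succ] at hp
      rw [Wn_succ]
      exact Fc_mono D I IH hp
  have hcard : ∀ n, (Wn D I (n + 1)).ncard < (Wn D I n).ncard := by
    intro n
    refine Set.ncard_lt_ncard ?_ (Set.toFinite _)
    rw [Set.ssubset_iff_subset_ne]
    refine ⟨hmono n, ?_⟩
    rw [Wn_succ]
    exact h n
  have hle : ∀ n, (Wn D I n).ncard + n ≤ (Wn D I 0).ncard := by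
    intro n
    induction n with
    | zero => omega
    | succ n IH => have := hcard n; omega
  have := hle ((Wn D I 0).ncard + 1)
  omega

lemma mc_thRefines {A S : Type} [Fintype A] [Fintype S]
    (D : DMTS A S) (hc : D.Consistent) : D.mc.ThRefines D := by
  intro T _ I hsat
  obtain ⟨Q, hQ, hQi⟩ := hsat
  obtain ⟨N, hN⟩ := exists_stab D I
  refine ⟨Wn D I N, ?_, ?_⟩
  · intro j x hjx
    rw [← hN, mem_Fc] at hjx
    obtain ⟨h1, h2⟩ := hjx
    constructor
    · intro a j' ht
      obtain ⟨w, hw, -, hmem⟩ := h1 a j' ht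
      exact ⟨w, hw, hmem⟩
    · intro N₂ hN₂
      obtain ⟨a, j', v, htr, hv, -, hmem⟩ := h2 N₂ hN₂
      refine ⟨{(a, j')}, ⟨a, j', htr, rfl⟩, ?_⟩
      intro b t1 hb
      rw [Set.mem_singleton_iff, Prod.mk.injEq] at hb
      obtain ⟨hb1, hb2⟩ := hb
      subst hb1
      subst hb2
      exact ⟨v, hv, hmem⟩
  · intro jj hj
    obtain ⟨s, hs, hjs⟩ := hQi jj hj
    exact ⟨s, hs, mem_Wn_of_Q D hc I Q hQ N jj s hjs⟩

end Main

/-- For any DMTS `D`, `D ≤m mc(D)` and `D ≡th mc(D)`;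
in particular `⟦D⟧ = ⟦mc(D)⟧`. -/
theorem may_completion_spec {A : Type} [Fintype A] {S : Type} [Fintype S]
    (D : DMTS A S) (hc : D.Consistent) :
    D.Refines D.mc ∧ D.ThRefines D.mc ∧ D.mc.ThRefines D ∧
      ∀ (T : Type) [Fintype T] (I : LTS A T), D.Sat I ↔ D.mc.Sat I := by
  refine ⟨refines_mc D, thRefines_mc D, mc_thRefines D hc, ?_⟩
  intro T inst I
  exact ⟨fun h => thRefines_mc D T I h, fun h => mc_thRefines D hc T I h⟩
end

section
/- Let Σ = {a1,…,an} be a finite alphabet of size n. There exists an acceptance automaton A with a single state (namely A = ({s⁰},{s⁰},Tran) with Tran(s⁰) = {M ⊆ Σ×{s⁰} : |M| is even}) such that every DMTS D with ⟦D⟧ = ⟦A⟧ has at least 2^(n−1) states. -/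
open Set

/-- One-state loop LTS with label set `E`. -/
def loopLTS {A : Type} (E : Set A) : LTS A Unit := ⟨{()}, {p | p.2.1 ∈ E}⟩

lemma lift_ncard {A : Type} [Finite A] (S : Set A) :
    ({p : A × Unit | p.1 ∈ S}).ncard = S.ncard := by
  have h : {p : A × Unit | p.1 ∈ S} = (fun a => (a, ())) '' S := by
    ext ⟨a, u⟩; simp
  rw [h, Set.ncard_image_of_injective _ (fun a b h => congrArg Prod.fst h)]

/-- The even-cardinality acceptance automaton. -/
def evenAA (A : Type) : AA A Unit := ⟨{()}, fun _ => {M : Set (A × Unit) | Even M.ncard}⟩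

lemma loop_sat {A : Type} [Fintype A] (E : Set A) (hE : Even E.ncard) :
    (evenAA A).Sat (loopLTS E) := by
  refine ⟨Set.univ, ?_, fun s1 _ => ⟨(), rfl, trivial⟩⟩
  intro s1 s2 _ M1 hM1
  have hM : M1 = {p : A × Unit | p.1 ∈ E} := hM1
  refine ⟨M1, ?_, fun a t1 h => ⟨(), by rwa [hM] at h ⊢, trivial⟩,
    fun a t2 h => ⟨(), by rwa [hM] at h ⊢, trivial⟩⟩
  show Even M1.ncard
  rw [hM, lift_ncard]; exact hE

/-- Mixed 3-state LTS: root 0 goes by `a₀` to an `E`-loop state 1 and by `F` to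
an `F`-loop state 2. -/
def Jlts {A : Type} (E F : Set A) (a₀ : A) : LTS A (Fin 3) :=
  ⟨{0}, {p | (p.1 = 0 ∧ p.2.1 = a₀ ∧ p.2.2 = 1) ∨ (p.1 = 0 ∧ p.2.1 ∈ F ∧ p.2.2 = 2) ∨
        (p.1 = 1 ∧ p.2.1 ∈ E ∧ p.2.2 = 1) ∨ (p.1 = 2 ∧ p.2.1 ∈ F ∧ p.2.2 = 2)}⟩

lemma core_contra {A : Type} [Fintype A] {T : Type} [Fintype T] (D : DMTS A T)
    (hiff : ∀ (U : Type) [Fintype U] (I : LTS A U), D.Sat I ↔ (evenAA A).Sat I)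
    (E F : Set A) (hF : Even F.ncard) (t : T) (ht : t ∈ D.init)
    (RE RF : Set (Unit × T))
    (hRE : IsDMTSRef (loopLTS E).toDMTS D RE) (hRF : IsDMTSRef (loopLTS F).toDMTS D RF)
    (htE : ((), t) ∈ RE) (htF : ((), t) ∈ RF)
    (a₀ : A) (haE : a₀ ∈ E) (haF : a₀ ∉ F) : False := by
  set J := Jlts E F a₀ with hJ
  set R : Set (Fin 3 × T) := {q | (q.1 = 0 ∧ q.2 = t) ∨ (q.1 = 1 ∧ ((), q.2) ∈ RE) ∨
    (q.1 = 2 ∧ ((), q.2) ∈ RF)} with hR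
  have hsat : D.Sat J := by
    refine ⟨R, ?_, fun s1 hs1 => ⟨t, ht, Or.inl ⟨hs1, rfl⟩⟩⟩
    rintro s1 s2 (⟨h1, h2⟩ | ⟨h1, h2⟩ | ⟨h1, h2⟩)
    · have h1' : s1 = 0 := h1
      have h2' : s2 = t := h2
      subst h1'
      have htE' : ((), s2) ∈ RE := by rw [h2']; exact htE
      have htF' : ((), s2) ∈ RF := by rw [h2']; exact htF
      constructor
      · rintro a t1 (⟨_, ha, ht1⟩ | ⟨_, ha, ht1⟩ | ⟨h, _, _⟩ | ⟨h, _, _⟩)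
        · have ha' : a = a₀ := ha
          subst ha'
          obtain ⟨t2, hmay, hrel⟩ := (hRE () s2 htE').1 a () haE
          exact ⟨t2, hmay, Or.inr (Or.inl ⟨ht1, hrel⟩)⟩
        · obtain ⟨t2, hmay, hrel⟩ := (hRF () s2 htF').1 a () ha
          exact ⟨t2, hmay, Or.inr (Or.inr ⟨ht1, hrel⟩)⟩
        · simp at h
        · simp at h
      · intro N2 hN2
        obtain ⟨N1, ⟨b, u, hb, hN1eq⟩, hmatch⟩ := (hRF () s2 htF').2 N2 hN2
        have hN1' : N1 = {(b, u)} := hN1eq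
        obtain ⟨t2, ht2, hrel⟩ := hmatch b () (by rw [hN1']; rfl)
        refine ⟨{(b, (2 : Fin 3))}, ⟨b, 2, Or.inr (Or.inl ⟨rfl, hb, rfl⟩), rfl⟩, ?_⟩
        intro a y1 hm
        simp only [Set.mem_singleton_iff, Prod.mk.injEq] at hm
        obtain ⟨rfl, rfl⟩ := hm
        exact ⟨t2, ht2, Or.inr (Or.inr ⟨rfl, hrel⟩)⟩
    · have h1' : s1 = 1 := h1
      have h2' : ((), s2) ∈ RE := h2
      subst h1'
      constructor
      · rintro a t1 (⟨h, _, _⟩ | ⟨h, _, _⟩ | ⟨_, ha, ht1⟩ | ⟨h, _, _⟩)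
        · simp at h
        · simp at h
        · obtain ⟨t2, hmay, hrel⟩ := (hRE () s2 h2').1 a () ha
          exact ⟨t2, hmay, Or.inr (Or.inl ⟨ht1, hrel⟩)⟩
        · simp at h
      · intro N2 hN2
        obtain ⟨N1, ⟨b, u, hb, hN1eq⟩, hmatch⟩ := (hRE () s2 h2').2 N2 hN2
        have hN1' : N1 = {(b, u)} := hN1eq
        obtain ⟨t2, ht2, hrel⟩ := hmatch b () (by rw [hN1']; rfl)
        refine ⟨{(b, (1 : Fin 3))}, ⟨b, 1, Or.inr (Or.inr (Or.inl ⟨rfl, hb, rfl⟩)), rfl⟩, ?_⟩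
        intro a y1 hm
        simp only [Set.mem_singleton_iff, Prod.mk.injEq] at hm
        obtain ⟨rfl, rfl⟩ := hm
        exact ⟨t2, ht2, Or.inr (Or.inl ⟨rfl, hrel⟩)⟩
    · have h1' : s1 = 2 := h1
      have h2' : ((), s2) ∈ RF := h2
      subst h1'
      constructor
      · rintro a t1 (⟨h, _, _⟩ | ⟨h, _, _⟩ | ⟨h, _, _⟩ | ⟨_, ha, ht1⟩)
        · simp at h
        · simp at h
        · simp at h
        · obtain ⟨t2, hmay, hrel⟩ := (hRF () s2 h2').1 a () ha
          exact ⟨t2, hmay, Or.inr (Or.inr ⟨ht1, hrel⟩)⟩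
      · intro N2 hN2
        obtain ⟨N1, ⟨b, u, hb, hN1eq⟩, hmatch⟩ := (hRF () s2 h2').2 N2 hN2
        have hN1' : N1 = {(b, u)} := hN1eq
        obtain ⟨t2, ht2, hrel⟩ := hmatch b () (by rw [hN1']; rfl)
        refine ⟨{(b, (2 : Fin 3))}, ⟨b, 2, Or.inr (Or.inr (Or.inr ⟨rfl, hb, rfl⟩)), rfl⟩, ?_⟩
        intro a y1 hm
        simp only [Set.mem_singleton_iff, Prod.mk.injEq] at hm
        obtain ⟨rfl, rfl⟩ := hm
        exact ⟨t2, ht2, Or.inr (Or.inr ⟨rfl, hrel⟩)⟩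
  obtain ⟨R', hR', hinit⟩ := (hiff (Fin 3) J).mp hsat
  obtain ⟨x, _, hx⟩ := hinit 0 rfl
  obtain ⟨M2, hM2even, hfwd, hbwd⟩ :=
    hR' 0 x hx {p | ((0 : Fin 3), p.1, p.2) ∈ J.trans} rfl
  have hM2 : M2 = {p : A × Unit | p.1 ∈ insert a₀ F} := by
    ext ⟨a, u⟩
    constructor
    · intro hm
      obtain ⟨t1, hM1, _⟩ := hbwd a u hm
      rcases hM1 with ⟨_, ha, _⟩ | ⟨_, ha, _⟩ | ⟨h, _, _⟩ | ⟨h, _, _⟩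
      · exact Or.inl ha
      · exact Or.inr ha
      · simp at h
      · simp at h
    · rintro (rfl | ha)
      · obtain ⟨t2, hmem, _⟩ := hfwd a 1 (Or.inl ⟨rfl, rfl, rfl⟩)
        exact hmem
      · obtain ⟨t2, hmem, _⟩ := hfwd a 2 (Or.inr (Or.inl ⟨rfl, ha, rfl⟩))
        exact hmem
  have heven : Even M2.ncard := hM2even
  rw [hM2, lift_ncard, Set.ncard_insert_of_notMem haF F.toFinite] at heven
  exact (Nat.even_add_one.mp heven) hF

/-- There is a one-state acceptance automaton (whose transition
constraint consists of all sets of even cardinality) such that every DMTS with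
the same implementation set has at least `2^(n-1)` states, `n = |Σ|`. -/
theorem aa_to_dmts_blowup {A : Type} [Fintype A] (n : ℕ) (hn : Fintype.card A = n) :
    ∃ Aut : AA A Unit,
      Aut.init = {()} ∧
      (∀ u, Aut.Tran u = {M : Set (A × Unit) | Even M.ncard}) ∧
      (∀ u ∈ Aut.init, (Aut.Tran u).Nonempty) ∧
      ∀ (T : Type) [Fintype T] (D : DMTS A T), D.Consistent →
        (∀ (U : Type) [Fintype U] (I : LTS A U), D.Sat I ↔ Aut.Sat I) →
        2 ^ (n - 1) ≤ Fintype.card T := by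
  classical
  refine ⟨evenAA A, rfl, fun u => rfl, fun u _ => ⟨∅, by simp [evenAA]⟩, ?_⟩
  intro T _ D _ hiff
  -- every even subset gives a satisfying loop implementation
  have hsat : ∀ E : Set A, Even E.ncard → D.Sat (loopLTS E) :=
    fun E hE => (hiff Unit (loopLTS E)).mpr (loop_sat E hE)
  have hc := fun (E : {E : Set A // Even E.ncard}) => hsat E.1 E.2
  choose Rm hRm hInit using hc
  have hc2 := fun (E : {E : Set A // Even E.ncard}) => hInit E () rfl
  choose f hfInit hfR using hc2
  have hfinj : Function.Injective f := by
    intro E1 E2 heq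
    by_contra hne
    have hne' : E1.1 ≠ E2.1 := fun h => hne (Subtype.ext h)
    have : ∃ a, (a ∈ E1.1 ∧ a ∉ E2.1) ∨ (a ∈ E2.1 ∧ a ∉ E1.1) := by
      by_contra hall
      push_neg at hall
      exact hne' (Set.ext fun a => ⟨(hall a).1, (hall a).2⟩)
    obtain ⟨a₀, ⟨haE, haF⟩ | ⟨haE, haF⟩⟩ := this
    · exact core_contra D hiff E1.1 E2.1 E2.2 (f E2) (hfInit E2) (Rm E1) (Rm E2)
        (hRm E1) (hRm E2) (heq ▸ hfR E1) (hfR E2) a₀ haE haF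
    · exact core_contra D hiff E2.1 E1.1 E1.2 (f E1) (hfInit E1) (Rm E2) (Rm E1)
        (hRm E2) (hRm E1) (heq ▸ hfR E2) (hfR E1) a₀ haE haF
  rcases Nat.eq_zero_or_pos n with hn0 | hpos
  · -- n = 0 : just need T nonempty
    subst hn0
    have hT : Nonempty T := ⟨f ⟨∅, by simp⟩⟩
    simpa [Nat.one_le_iff_ne_zero] using (Fintype.card_pos_iff.mpr hT).ne'
  · -- n ≥ 1 : pick a₀ and inject subsets of A \ {a₀} into even subsets
    have hApos : 0 < Fintype.card A := hn ▸ hpos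
    obtain ⟨a₀⟩ := Fintype.card_pos_iff.mp hApos
    set V : Set {a : A // a ≠ a₀} → Set A := fun S => Subtype.val '' S with hV
    have ha₀V : ∀ S, a₀ ∉ V S := by
      rintro S ⟨⟨b, hb⟩, _, hba⟩; exact hb hba
    set g : Set {a : A // a ≠ a₀} → {E : Set A // Even E.ncard} := fun S =>
      if h : Even (V S).ncard then ⟨V S, h⟩
      else ⟨insert a₀ (V S), by
        rw [Set.ncard_insert_of_notMem (ha₀V S) (V S).toFinite]
        exact Nat.even_add_one.mpr h⟩ with hg
    have hkey : ∀ S a (ha : a ≠ a₀), (⟨a, ha⟩ : {a : A // a ≠ a₀}) ∈ S ↔ a ∈ (g S).1 := by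
      intro S a ha
      have h1 : (⟨a, ha⟩ : {a : A // a ≠ a₀}) ∈ S ↔ a ∈ V S := by
        constructor
        · intro h; exact ⟨⟨a, ha⟩, h, rfl⟩
        · rintro ⟨⟨b, hb⟩, hmem, rfl⟩; exact hmem
      rw [h1, hg]
      dsimp only
      split_ifs with h
      · rfl
      · simp only [Set.mem_insert_iff]
        exact ⟨Or.inr, fun hh => hh.elim (fun he => absurd he ha) id⟩
    have hginj : Function.Injective g := by
      intro S1 S2 heq
      ext ⟨a, ha⟩
      rw [hkey S1 a ha, hkey S2 a ha, heq]
    have hcard1 : Fintype.card {a : A // a ≠ a₀} = n - 1 := by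
      rw [Fintype.card_subtype_compl, Fintype.card_subtype_eq, hn]
    calc 2 ^ (n - 1) = Fintype.card (Set {a : A // a ≠ a₀}) := by
          rw [Fintype.card_set, hcard1]
      _ ≤ Fintype.card {E : Set A // Even E.ncard} := Fintype.card_le_of_injective g hginj
      _ ≤ Fintype.card T := Fintype.card_le_of_injective f hfinj
end

section
/- For all acceptance automata A1 and A2 over a finite alphabet Σ: A1 ≤m A2 if and only if bl(A1) ≤m bl(A2), where bl is the translation from AA to L-expressions. -/
open Set

lemma mem_setList {α : Type} [Finite α] {s : Set α} {x : α} :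
    x ∈ setList s ↔ x ∈ s := by
  simp [setList, Set.Finite.mem_toFinset]

lemma lsem_listOr {A X : Type} (l : List (LForm A X)) (M : Set (A × X)) :
    M ∈ lsem (listOr l) ↔ ∃ φ ∈ l, M ∈ lsem φ := by
  induction l with
  | nil => simp [listOr, lsem]
  | cons φ t ih =>
      simp only [listOr, List.foldr_cons] at *
      constructor
      · intro h
        by_cases hφ : M ∈ lsem φ
        · exact ⟨φ, by simp, hφ⟩
        · have : M ∈ lsem (t.foldr LForm.lor LForm.ff) := by
            by_contra hc
            exact h ⟨hφ, hc⟩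
          obtain ⟨ψ, hψ, hM⟩ := ih.mp this
          exact ⟨ψ, by simp [hψ], hM⟩
      · rintro ⟨ψ, hψ, hM⟩
        rcases List.mem_cons.mp hψ with rfl | hψ
        · intro hc; exact hc.1 hM
        · intro hc; exact hc.2 (ih.mpr ⟨ψ, hψ, hM⟩)

lemma lsem_listAnd {A X : Type} (l : List (LForm A X)) (M : Set (A × X)) :
    M ∈ lsem (listAnd l) ↔ ∀ φ ∈ l, M ∈ lsem φ := by
  induction l with
  | nil => simp [listAnd, lsem]
  | cons φ t ih =>
      simp only [listAnd, List.foldr_cons] at *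
      constructor
      · rintro ⟨h1, h2⟩ ψ hψ
        rcases List.mem_cons.mp hψ with rfl | hψ
        · exact h1
        · exact ih.mp h2 ψ hψ
      · intro h
        exact ⟨h φ (by simp), ih.mpr fun ψ hψ => h ψ (by simp [hψ])⟩

lemma lsem_bl {A S : Type} [Finite A] [Finite S] (Aut : AA A S) (s : S) :
    lsem ((bl Aut).Phi s) = Aut.Tran s := by
  ext M
  simp only [bl, lsem_listOr, List.mem_map]
  constructor
  · rintro ⟨φ, ⟨M', hM', rfl⟩, hM⟩
    have hM'tran : M' ∈ Aut.Tran s := mem_setList.mp hM'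
    obtain ⟨h1, h2⟩ := hM
    have hsub : M' ⊆ M := by
      intro p hp
      have := (lsem_listAnd _ M).mp h1 (LForm.dia p.1 p.2)
        (List.mem_map.mpr ⟨p, mem_setList.mpr hp, rfl⟩)
      exact this
    have hsub2 : M ⊆ M' := by
      intro p hp
      by_contra hc
      have := (lsem_listAnd _ M).mp h2 (LForm.neg (LForm.dia p.1 p.2))
        (List.mem_map.mpr ⟨p, mem_setList.mpr hc, rfl⟩)
      exact this hp
    have : M = M' := le_antisymm hsub2 hsub
    rwa [this]
  · intro hM
    refine ⟨_, ⟨M, mem_setList.mpr hM, rfl⟩, ?_, ?_⟩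
    · rw [lsem_listAnd]
      rintro φ hφ
      obtain ⟨p, hp, rfl⟩ := List.mem_map.mp hφ
      have hpM : p ∈ M := mem_setList.mp hp
      show (p.1, p.2) ∈ M
      simpa using hpM
    · rw [lsem_listAnd]
      rintro φ hφ
      obtain ⟨p, hp, rfl⟩ := List.mem_map.mp hφ
      have hpM : p ∈ Mᶜ := mem_setList.mp hp
      show (p.1, p.2) ∉ M
      simpa using hpM

/-- `A1 ≤m A2` iff `bl(A1) ≤m bl(A2)`. -/
theorem aa_refines_iff_bl_refines {A : Type} [Fintype A]
    {S1 S2 : Type} [Fintype S1] [Fintype S2]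
    (A1 : AA A S1) (A2 : AA A S2)
    (h1 : ∀ s ∈ A1.init, (A1.Tran s).Nonempty)
    (h2 : ∀ s ∈ A2.init, (A2.Tran s).Nonempty) :
    A1.Refines A2 ↔ (bl A1).Refines (bl A2) := by
  have e1 : (fun x => lsem ((bl A1).Phi x)) = A1.Tran := funext (lsem_bl A1)
  have e2 : (fun x => lsem ((bl A2).Phi x)) = A2.Tran := funext (lsem_bl A2)
  unfold AA.Refines LExpr.Refines
  rw [e1, e2]
  rfl
end

section
/- Modal refinement is sound for acceptance automata and for L-expressions: for all AA A1, A2, A1 ≤m A2 implies ⟦A1⟧ ⊆ ⟦A2⟧; and for all L-expressions E1, E2, E1 ≤m E2 implies ⟦E1⟧ ⊆ ⟦E2⟧. -/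
open Set

lemma IsAARef.comp {A S1 S2 S3 : Type} {T1 : S1 → Set (Set (A × S1))}
    {T2 : S2 → Set (Set (A × S2))} {T3 : S3 → Set (Set (A × S3))}
    {R : Set (S1 × S2)} {R' : Set (S2 × S3)}
    (h : IsAARef T1 T2 R) (h' : IsAARef T2 T3 R') :
    IsAARef T1 T3 {p | ∃ s2, (p.1, s2) ∈ R ∧ (s2, p.2) ∈ R'} := by
  rintro s1 s3 ⟨s2, hR, hR'⟩ M1 hM1
  obtain ⟨M2, hM2, f12, b12⟩ := h s1 s2 hR M1 hM1
  obtain ⟨M3, hM3, f23, b23⟩ := h' s2 s3 hR' M2 hM2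
  refine ⟨M3, hM3, ?_, ?_⟩
  · intro a t1 ht1
    obtain ⟨t2, ht2, hr⟩ := f12 a t1 ht1
    obtain ⟨t3, ht3, hr'⟩ := f23 a t2 ht2
    exact ⟨t3, ht3, t2, hr, hr'⟩
  · intro a t3 ht3
    obtain ⟨t2, ht2, hr'⟩ := b23 a t3 ht3
    obtain ⟨t1, ht1, hr⟩ := b12 a t2 ht2
    exact ⟨t1, ht1, t2, hr, hr'⟩

/-- Modal refinement is sound for acceptance automata and for
`L`-expressions: refinement implies inclusion of implementation sets. -/
theorem aa_and_lexpr_refinement_sound {A : Type} [Fintype A] :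
    (∀ (S1 S2 : Type) [Fintype S1] [Fintype S2] (A1 : AA A S1) (A2 : AA A S2),
      (∀ s ∈ A1.init, (A1.Tran s).Nonempty) →
      (∀ s ∈ A2.init, (A2.Tran s).Nonempty) →
      A1.Refines A2 →
      ∀ (T : Type) [Fintype T] (I : LTS A T), A1.Sat I → A2.Sat I) ∧
    (∀ (X1 X2 : Type) [Fintype X1] [Fintype X2] (E1 : LExpr A X1) (E2 : LExpr A X2),
      E1.Refines E2 →
      ∀ (T : Type) [Fintype T] (I : LTS A T), E1.Sat I → E2.Sat I) := by
  constructor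
  · rintro S1 S2 _ _ A1 A2 _ _ ⟨R', hR', hinit'⟩ T _ I ⟨R, hR, hinit⟩
    refine ⟨{p | ∃ s2, (p.1, s2) ∈ R ∧ (s2, p.2) ∈ R'}, hR.comp hR', ?_⟩
    intro s hs
    obtain ⟨x1, hx1, hr⟩ := hinit s hs
    obtain ⟨x2, hx2, hr'⟩ := hinit' x1 hx1
    exact ⟨x2, hx2, x1, hr, hr'⟩
  · rintro X1 X2 _ _ E1 E2 ⟨R', hR', hinit'⟩ T _ I ⟨R, hR, hinit⟩
    refine ⟨{p | ∃ x1, (p.1, x1) ∈ R ∧ (x1, p.2) ∈ R'}, hR.comp hR', ?_⟩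
    intro s hs
    obtain ⟨x1, hx1, hr⟩ := hinit s hs
    obtain ⟨x2, hx2, hr'⟩ := hinit' x1 hx1
    exact ⟨x2, hx2, x1, hr, hr'⟩
end

section
/- For any ν-calculus expression N1 = (X1, X1⁰, Δ1) over a finite alphabet Σ there exists a ν-calculus expression N2 = (X2, X2⁰, Δ2) in normal form with ⟦N1⟧ = ⟦N2⟧; that is, every Δ2(x) has the form ⋀_{i∈I}(⋁_{j∈Ji} ⟨a_ij⟩x_ij) ∧ ⋀_{a∈Σ}[a](⋁_{j∈Ja} y_{a,j}) for finite (possibly empty) index sets, and additionally for all i ∈ I and j ∈ Ji there exists j' ∈ J_{a_ij} with x_ij ≤th y_{a_ij,j'}. -/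
open Set

section NormalFormAux

variable {A X S : Type}

/-- Subformulas of an HML formula. -/
def subf : HML A X → Set (HML A X)
  | HML.tt => {HML.tt}
  | HML.ff => {HML.ff}
  | HML.var x => {HML.var x}
  | HML.dia a φ => insert (HML.dia a φ) (subf φ)
  | HML.box a φ => insert (HML.box a φ) (subf φ)
  | HML.and φ ψ => insert (HML.and φ ψ) (subf φ ∪ subf ψ)
  | HML.or φ ψ => insert (HML.or φ ψ) (subf φ ∪ subf ψ)

lemma subf_self (φ : HML A X) : φ ∈ subf φ := by
  cases φ <;> simp [subf]

lemma subf_finite (φ : HML A X) : (subf φ).Finite := by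
  induction φ with
  | tt => exact Set.finite_singleton _
  | ff => exact Set.finite_singleton _
  | var x => exact Set.finite_singleton _
  | dia a φ ih => exact ih.insert _
  | box a φ ih => exact ih.insert _
  | and φ ψ ih1 ih2 => exact (ih1.union ih2).insert _
  | or φ ψ ih1 ih2 => exact (ih1.union ih2).insert _

lemma subf_trans {φ ψ : HML A X} (h : ψ ∈ subf φ) : subf ψ ⊆ subf φ := by
  induction φ with
  | tt => simp [subf] at h; subst h; exact subset_rfl
  | ff => simp [subf] at h; subst h; exact subset_rfl
  | var x => simp [subf] at h; subst h; exact subset_rfl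
  | dia a φ ih =>
      rcases h with rfl | h
      · exact subset_rfl
      · exact (ih h).trans (Set.subset_insert _ _)
  | box a φ ih =>
      rcases h with rfl | h
      · exact subset_rfl
      · exact (ih h).trans (Set.subset_insert _ _)
  | and φ ψ' ih1 ih2 =>
      rcases h with rfl | h | h
      · exact subset_rfl
      · exact (ih1 h).trans ((Set.subset_union_left).trans (Set.subset_insert _ _))
      · exact (ih2 h).trans ((Set.subset_union_right).trans (Set.subset_insert _ _))
  | or φ ψ' ih1 ih2 =>
      rcases h with rfl | h | h
      · exact subset_rfl
      · exact (ih1 h).trans ((Set.subset_union_left).trans (Set.subset_insert _ _))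
      · exact (ih2 h).trans ((Set.subset_union_right).trans (Set.subset_insert _ _))

/-- The finite subformula-closed universe of formulas for a declaration. -/
def S0 (Δ : X → HML A X) : Set (HML A X) :=
  Set.range HML.var ∪ ⋃ x, subf (Δ x)

lemma S0_finite [Finite X] (Δ : X → HML A X) : (S0 Δ).Finite :=
  (Set.finite_range _).union (Set.finite_iUnion fun x => subf_finite (Δ x))

lemma S0_decl (Δ : X → HML A X) (x : X) : Δ x ∈ S0 Δ :=
  Set.mem_union_right _ (Set.mem_iUnion.2 ⟨x, subf_self _⟩)

lemma S0_var (Δ : X → HML A X) (x : X) : HML.var x ∈ S0 Δ :=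
  Set.mem_union_left _ ⟨x, rfl⟩

lemma S0_closed_subf {Δ : X → HML A X} {χ φ : HML A X}
    (hχ : χ ∈ S0 Δ) (h : φ ∈ subf χ) : φ ∈ S0 Δ := by
  rcases hχ with ⟨x, hx⟩ | hx
  · subst hx
    simp [subf] at h; subst h
    exact S0_var Δ x
  · rcases Set.mem_iUnion.1 hx with ⟨x, hx⟩
    exact Set.mem_union_right _ (Set.mem_iUnion.2 ⟨x, subf_trans hx h⟩)

lemma S0_and {Δ : X → HML A X} {φ ψ : HML A X} (h : HML.and φ ψ ∈ S0 Δ) :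
    φ ∈ S0 Δ ∧ ψ ∈ S0 Δ :=
  ⟨S0_closed_subf h (by simp [subf, subf_self]),
   S0_closed_subf h (by simp [subf, subf_self])⟩

lemma S0_or {Δ : X → HML A X} {φ ψ : HML A X} (h : HML.or φ ψ ∈ S0 Δ) :
    φ ∈ S0 Δ ∧ ψ ∈ S0 Δ :=
  ⟨S0_closed_subf h (by simp [subf, subf_self]),
   S0_closed_subf h (by simp [subf, subf_self])⟩

lemma S0_dia {Δ : X → HML A X} {a : A} {φ : HML A X} (h : HML.dia a φ ∈ S0 Δ) :
    φ ∈ S0 Δ :=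
  S0_closed_subf h (by simp [subf, subf_self])

lemma S0_box {Δ : X → HML A X} {a : A} {φ : HML A X} (h : HML.box a φ ∈ S0 Δ) :
    φ ∈ S0 Δ :=
  S0_closed_subf h (by simp [subf, subf_self])

/-- A set of formulas closed under the expansion rules. -/
def ExpSet (Δ : X → HML A X) (Γ : Set (HML A X)) : Prop :=
  (∀ φ ψ, HML.and φ ψ ∈ Γ → φ ∈ Γ ∧ ψ ∈ Γ) ∧
  (∀ φ ψ, HML.or φ ψ ∈ Γ → φ ∈ Γ ∨ ψ ∈ Γ) ∧
  (∀ x, HML.var x ∈ Γ → Δ x ∈ Γ)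

/-- The box obligations of a set of formulas for a given action. -/
def BoxS (Γ : Set (HML A X)) (a : A) : Set (HML A X) :=
  {ψ | HML.box a ψ ∈ Γ}

/-- Variables of the normal form: subsets of the subformula universe. -/
def NFVar (Δ : X → HML A X) : Type :=
  {Γ : Set (HML A X) // Γ ⊆ S0 Δ}

/-- The normal-form expression associated to a ν-calculus expression. -/
def nfOf (N : NuExpr A X) : NF A (NFVar N.decl) where
  init := {Γ | ExpSet N.decl Γ.val ∧ ∃ x ∈ N.init, HML.var x ∈ Γ.val}
  dia := fun Γ =>
    {N' | ∃ a φ, HML.dia a φ ∈ Γ.val ∧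
      N' = {p | p.1 = a ∧ ExpSet N.decl p.2.val ∧ φ ∈ p.2.val ∧
        BoxS Γ.val a ⊆ p.2.val}} ∪
    {N' | HML.ff ∈ Γ.val ∧ N' = ∅}
  box := fun Γ a => {Γ' | ExpSet N.decl Γ'.val ∧ BoxS Γ.val a ⊆ Γ'.val}

lemma hsem_mono (I : LTS A S) {σ σ' : X → Set S} (h : ∀ x, σ x ⊆ σ' x) :
    ∀ φ : HML A X, hsem I φ σ ⊆ hsem I φ σ' := by
  intro φ
  induction φ with
  | tt => exact subset_rfl
  | ff => exact subset_rfl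
  | var x => exact h x
  | dia a φ ih => rintro s ⟨s', ht, hs⟩; exact ⟨s', ht, ih hs⟩
  | box a φ ih => intro s hs s' ht; exact ih (hs s' ht)
  | and φ ψ ih1 ih2 => exact Set.inter_subset_inter ih1 ih2
  | or φ ψ ih1 ih2 => exact Set.union_subset_union ih1 ih2

lemma hgfp_prefixed (I : LTS A S) (Δ : X → HML A X) (x : X) :
    hgfp I Δ x ⊆ hsem I (Δ x) (hgfp I Δ) := by
  rintro s ⟨σ, hσ, hs⟩
  refine hsem_mono I ?_ (Δ x) (hσ x hs)
  intro y t ht; exact ⟨σ, hσ, ht⟩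

lemma nfSem_mono {X' : Type} (n : NF A X') (I : LTS A S) {σ σ' : X' → Set S}
    (h : ∀ y, σ y ⊆ σ' y) (x : X') : nfSem n I σ x ⊆ nfSem n I σ' x := by
  rintro s ⟨h1, h2⟩
  refine ⟨fun N hN => ?_, fun a s' ht => ?_⟩
  · obtain ⟨p, hp, s', ht, hs⟩ := h1 N hN
    exact ⟨p, hp, s', ht, h _ hs⟩
  · obtain ⟨y, hy, hs⟩ := h2 a s' ht
    exact ⟨y, hy, h y hs⟩

lemma nfGfp_prefixed {X' : Type} (n : NF A X') (I : LTS A S) (x : X') :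
    nfGfp n I x ⊆ nfSem n I (nfGfp n I) x := by
  rintro s ⟨σ, hσ, hs⟩
  refine nfSem_mono n I ?_ x (hσ x hs)
  intro y t ht; exact ⟨σ, hσ, ht⟩

/-- The truth set of a state, as a variable of the normal form. -/
def TrSet (N : NuExpr A X) (I : LTS A S) (s : S) : NFVar N.decl :=
  ⟨{φ | φ ∈ S0 N.decl ∧ s ∈ hsem I φ (hgfp I N.decl)}, fun φ hφ => hφ.1⟩

lemma TrSet_exp (N : NuExpr A X) (I : LTS A S) (s : S) :
    ExpSet N.decl (TrSet N I s).val := by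
  refine ⟨fun φ ψ h => ?_, fun φ ψ h => ?_, fun x h => ?_⟩
  · exact ⟨⟨(S0_and h.1).1, h.2.1⟩, ⟨(S0_and h.1).2, h.2.2⟩⟩
  · rcases h.2 with hs | hs
    · exact Or.inl ⟨(S0_or h.1).1, hs⟩
    · exact Or.inr ⟨(S0_or h.1).2, hs⟩
  · exact ⟨S0_decl _ x, hgfp_prefixed I N.decl x h.2⟩

/-- Direction 1 core: the conjunction-of-truth assignment is a prefixed point. -/
lemma dir1_prefixed (N : NuExpr A X) (I : LTS A S) (Γ : NFVar N.decl) :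
    {s | ∀ φ ∈ Γ.val, s ∈ hsem I φ (hgfp I N.decl)} ⊆
      nfSem (nfOf N) I (fun Γ' => {s | ∀ φ ∈ Γ'.val, s ∈ hsem I φ (hgfp I N.decl)}) Γ := by
  intro s hs
  constructor
  · rintro N' (⟨a, φ, hφΓ, rfl⟩ | ⟨hff, rfl⟩)
    · obtain ⟨s', ht, hs'⟩ := hs _ hφΓ
      refine ⟨(a, TrSet N I s'), ⟨rfl, TrSet_exp N I s', ?_, ?_⟩, s', ht, ?_⟩
      · exact ⟨S0_dia (Γ.2 hφΓ), hs'⟩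
      · intro ψ hψ
        exact ⟨S0_box (Γ.2 hψ), hs _ hψ s' ht⟩
      · intro χ hχ; exact hχ.2
    · exact absurd (hs _ hff) (Set.notMem_empty s)
  · intro a s' ht
    refine ⟨TrSet N I s', ⟨TrSet_exp N I s', ?_⟩, ?_⟩
    · intro ψ hψ
      exact ⟨S0_box (Γ.2 hψ), hs _ hψ s' ht⟩
    · intro χ hχ; exact hχ.2

/-- Direction 2 core: members of expanded variables hold in the induced assignment. -/
lemma dir2_key (N : NuExpr A X) (I : LTS A S) (φ : HML A X) :
    ∀ Γ : NFVar N.decl, ExpSet N.decl Γ.val → φ ∈ Γ.val →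
      nfGfp (nfOf N) I Γ ⊆ hsem I φ
        (fun x => {s | ∃ Γ' : NFVar N.decl, ExpSet N.decl Γ'.val ∧
          HML.var x ∈ Γ'.val ∧ s ∈ nfGfp (nfOf N) I Γ'}) := by
  induction φ with
  | tt => intro Γ _ _ s _; trivial
  | ff =>
      intro Γ _ hmem s hs
      obtain ⟨h1, _⟩ := nfGfp_prefixed (nfOf N) I Γ hs
      obtain ⟨p, hp, _⟩ := h1 ∅ (Or.inr ⟨hmem, rfl⟩)
      exact absurd hp (Set.notMem_empty p)
  | var x => intro Γ hexp hmem s hs; exact ⟨Γ, hexp, hmem, hs⟩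
  | dia a φ ih =>
      intro Γ _ hmem s hs
      obtain ⟨h1, _⟩ := nfGfp_prefixed (nfOf N) I Γ hs
      obtain ⟨p, ⟨ha, hexp', hφ', _⟩, s', ht, hs'⟩ := h1 _ (Or.inl ⟨a, φ, hmem, rfl⟩)
      exact ⟨s', by rwa [ha] at ht, ih p.2 hexp' hφ' hs'⟩
  | box a φ ih =>
      intro Γ _ hmem s hs s' ht
      obtain ⟨_, h2⟩ := nfGfp_prefixed (nfOf N) I Γ hs
      obtain ⟨Γ', ⟨hexp', hbox⟩, hs'⟩ := h2 a s' ht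
      exact ih Γ' hexp' (hbox hmem) hs'
  | and φ ψ ih1 ih2 =>
      intro Γ hexp hmem s hs
      obtain ⟨h1, h2⟩ := hexp.1 φ ψ hmem
      exact ⟨ih1 Γ hexp h1 hs, ih2 Γ hexp h2 hs⟩
  | or φ ψ ih1 ih2 =>
      intro Γ hexp hmem s hs
      rcases hexp.2.1 φ ψ hmem with h | h
      · exact Or.inl (ih1 Γ hexp h hs)
      · exact Or.inr (ih2 Γ hexp h hs)

lemma nfOf_models_iff (N : NuExpr A X) (I : LTS A S) :
    N.Models I ↔ (nfOf N).Models I := by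
  constructor
  · intro hM s0 hs0
    obtain ⟨x0, hx0, hs⟩ := hM s0 hs0
    refine ⟨TrSet N I s0, ⟨TrSet_exp N I s0, x0, hx0, S0_var _ x0, hs⟩, ?_⟩
    exact ⟨fun Γ' => {s | ∀ φ ∈ Γ'.val, s ∈ hsem I φ (hgfp I N.decl)},
      fun Γ' => dir1_prefixed N I Γ', fun χ hχ => hχ.2⟩
  · intro hM s0 hs0
    obtain ⟨Γ0, ⟨hexp0, x0, hx0, hvar0⟩, hs⟩ := hM s0 hs0
    refine ⟨x0, hx0, fun x => {s | ∃ Γ' : NFVar N.decl, ExpSet N.decl Γ'.val ∧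
        HML.var x ∈ Γ'.val ∧ s ∈ nfGfp (nfOf N) I Γ'}, ?_, Γ0, hexp0, hvar0, hs⟩
    rintro y s ⟨Γ', hexp', hvar', hs'⟩
    exact dir2_key N I (N.decl y) Γ' hexp' (hexp'.2.2 y hvar') hs'

end NormalFormAux

/-- Every ν-calculus expression is semantically equivalent to one
in normal form (including the side condition that every diamond successor is
thoroughly below some box successor). -/
theorem nu_calculus_normal_form {A : Type} [Fintype A]
    {X1 : Type} [Fintype X1] (N1 : NuExpr A X1) :
    ∃ (X2 : Type) (_ : Fintype X2) (N2 : NF A X2),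
      (∀ x, ∀ N ∈ N2.dia x, ∀ a y, (a, y) ∈ N →
        ∃ y' ∈ N2.box x a, N2.varThLe y y') ∧
      ∀ (S : Type) [Fintype S] (I : LTS A S), N1.Models I ↔ N2.Models I := by
  haveI : Finite (NFVar N1.decl) := (S0_finite N1.decl).finite_subsets.to_subtype
  refine ⟨NFVar N1.decl, Fintype.ofFinite _, nfOf N1, ?_, fun S _ I => nfOf_models_iff N1 I⟩
  rintro Γ N' (⟨a, φ, hφ, rfl⟩ | ⟨hff, rfl⟩) a' y hy
  · obtain ⟨ha, hexp, _, hbox⟩ := hy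
    subst ha
    exact ⟨y, ⟨hexp, hbox⟩, fun S _ I h => h⟩
  · exact absurd hy (Set.notMem_empty _)
end

section
/- For any DMTS D over a finite alphabet Σ, the may-completion satisfies mc(D) = hdt(ddh(D)), i.e. the may-completion of D equals the result of translating D to a normal-form ν-calculus expression by ddh and back to a DMTS by the semantic translation hdt. -/
open Set

lemma sat_iff_models_aux {A S T : Type} (D : DMTS A S) (I : LTS A T) (s : S) :
    (D.atState s).Sat I ↔ NF.Models ⟨{s}, (ddh D).dia, (ddh D).box⟩ I := by
  constructor
  · rintro ⟨R, hR, hinit⟩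
    intro s0 hs0
    refine ⟨s, rfl, fun x => {t | (t, x) ∈ R}, ?_, ?_⟩
    · intro y t ht
      constructor
      · intro N hN
        obtain ⟨-, hmust⟩ := hR t y ht
        obtain ⟨N1, hN1, hall⟩ := hmust N hN
        obtain ⟨a, u, htu, hNeq⟩ := hN1
        obtain ⟨t2, ht2, hR2⟩ := hall a u (show (a, u) ∈ (t, N1).2 from hNeq ▸ rfl)
        exact ⟨(a, t2), ht2, u, htu, hR2⟩
      · intro a t' htr
        obtain ⟨hmay, -⟩ := hR t y ht
        exact hmay a t' htr
    · obtain ⟨s2, hs2, hRs⟩ := hinit s0 hs0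
      cases hs2; exact hRs
  · intro h
    refine ⟨{p | p.1 ∈ nfGfp ⟨{s}, (ddh D).dia, (ddh D).box⟩ I p.2}, ?_, ?_⟩
    · rintro t x ⟨σ, hσ, htx⟩
      have hsem := hσ x htx
      constructor
      · intro a t1 htr
        obtain ⟨y, hy, ht1⟩ := hsem.2 a t1 htr
        exact ⟨y, hy, σ, hσ, ht1⟩
      · intro N2 hN2
        obtain ⟨⟨a, u⟩, haN2, t', htt', ht'⟩ := hsem.1 N2 hN2
        refine ⟨{(a, t')}, ⟨a, t', htt', rfl⟩, ?_⟩
        rintro b t1 hb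
        rcases hb with ⟨rfl, rfl⟩
        exact ⟨u, haN2, σ, hσ, ht'⟩
    · intro s0 hs0
      obtain ⟨x0, hx0, hg⟩ := h s0 hs0
      cases hx0
      exact ⟨s, rfl, hg⟩

lemma stateThLe_iff_varThLe {A S : Type} (D : DMTS A S) (t' t : S) :
    D.stateThLe t' t ↔ (ddh D).varThLe t' t := by
  constructor
  · intro h T _ I hI
    rw [← sat_iff_models_aux] at *
    exact h T I hI
  · intro h T _ I hI
    rw [sat_iff_models_aux] at *
    exact h T I hI

/-- `mc(D) = hdt(ddh(D))` for any DMTS `D`. -/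
theorem mc_eq_hdt_ddh {A : Type} [Fintype A] {S : Type} [Fintype S]
    (D : DMTS A S) (hc : D.Consistent) :
    D.mc = hdt (ddh D) := by
  have hmay : D.mc.may = (hdt (ddh D)).may := by
    ext ⟨s, a, t'⟩
    simp only [DMTS.mc, hdt, ddh, Set.mem_setOf_eq]
    constructor
    · rintro ⟨t, h1, h2⟩
      exact ⟨t, h1, (stateThLe_iff_varThLe D t' t).mp h2⟩
    · rintro ⟨t, h1, h2⟩
      exact ⟨t, h1, (stateThLe_iff_varThLe D t' t).mpr h2⟩
  show DMTS.mk D.mc.init D.mc.may D.mc.must =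
    DMTS.mk (hdt (ddh D)).init (hdt (ddh D)).may (hdt (ddh D)).must
  rw [hmay]
  rfl
end
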